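/- arXiv:1505.03330 — 5 statements merged into one kernel-verified Lean document; each statement's English description precedes it below -/
import Mathlib

section
/- Let $a : \mathrm{Fin}\, r \to \mathbb{Z}$ and $H = \{v \in \mathbb{N}^r \mid \sum_j v_j a_j \geq 0\}$. Suppose additionally that the group generated by $H$ inside $\mathbb{Z}^r$ is all of $\mathbb{Z}^r$ (equivalently, every $v \in \mathbb{N}^r$ is a difference of two elements of $H$). Then the set of irreducible elements of $H$ has at least $r$ elements. -/
/-- The submonoid of `ℕ^r` of exponent vectors `v` with `∑ j, v j * a j ≥ 0`,
corresponding to `Hol(s₀)`, the Artin L-functions holomorphic at `s₀`. -/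
def Hol (r : ℕ) (a : Fin r → ℤ) : AddSubmonoid (Fin r → ℕ) where
  carrier := {v | 0 ≤ ∑ j, (v j : ℤ) * a j}
  zero_mem' := by simp
  add_mem' := by
    intro u v hu hv
    simp only [Set.mem_setOf_eq, Pi.add_apply] at *
    have h : ∀ j ∈ Finset.univ (α := Fin r),
        ((u j + v j : ℕ) : ℤ) * a j = (u j : ℤ) * a j + (v j : ℤ) * a j := by
      intro j _; push_cast; ring
    rw [Finset.sum_congr rfl h, Finset.sum_add_distrib]
    exact add_nonneg hu hv

/-- `v` is an irreducible element of the submonoid `H` of `ℕ^r`. -/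
def Irred (r : ℕ) (H : AddSubmonoid (Fin r → ℕ)) (v : Fin r → ℕ) : Prop :=
  v ∈ H ∧ v ≠ 0 ∧ ∀ u w, u ∈ H → w ∈ H → v = u + w → u = 0 ∨ w = 0

lemma mem_Hol' {r : ℕ} {a : Fin r → ℤ} {v : Fin r → ℕ} (h : v ∈ Hol r a) :
    0 ≤ ∑ j, (v j : ℤ) * a j := h

lemma mem_Hol'' {r : ℕ} {a : Fin r → ℤ} {v : Fin r → ℕ} (h : 0 ≤ ∑ j, (v j : ℤ) * a j) :
    v ∈ Hol r a := h

lemma sum_single_mul {r : ℕ} (a : Fin r → ℤ) (j : Fin r) (n : ℕ) :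
    ∑ k, ((Pi.single j n : Fin r → ℕ) k : ℤ) * a k = (n : ℤ) * a j := by
  rw [Finset.sum_eq_single j]
  · simp
  · intro k _ hk; simp [Pi.single_eq_of_ne hk]
  · simp

lemma sum_support_pair {r : ℕ} (a : Fin r → ℤ) (u : Fin r → ℕ) {i j : Fin r} (hij : i ≠ j)
    (h : ∀ k, k ≠ i → k ≠ j → u k = 0) :
    ∑ k, (u k : ℤ) * a k = (u i : ℤ) * a i + (u j : ℤ) * a j := by
  have hsub : ∑ k ∈ ({i, j} : Finset (Fin r)), (u k : ℤ) * a k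
      = ∑ k, (u k : ℤ) * a k := by
    refine Finset.sum_subset (Finset.subset_univ _) ?_
    intro k _ hk
    simp only [Finset.mem_insert, Finset.mem_singleton, not_or] at hk
    simp [h k hk.1 hk.2]
  rw [← hsub, Finset.sum_pair hij]

lemma irred_single {r : ℕ} {a : Fin r → ℤ} {j : Fin r} (hj : 0 ≤ a j) :
    Irred r (Hol r a) (Pi.single j 1) := by
  refine ⟨mem_Hol'' (by rw [sum_single_mul]; simpa using hj), ?_, ?_⟩
  · intro h
    have := congrFun h j
    simp [Pi.single_eq_same] at this
  · intro u w _ _ heq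
    have hj' : u j + w j = 1 := by
      have := congrFun heq j; simp [Pi.single_eq_same] at this; omega
    have hk : ∀ k, k ≠ j → u k = 0 ∧ w k = 0 := by
      intro k hk
      have := congrFun heq k
      simp [Pi.single_eq_of_ne hk] at this
      omega
    rcases Nat.add_eq_one_iff.mp hj' with ⟨h1, _⟩ | ⟨_, h2⟩
    · left; funext k
      by_cases hkj : k = j
      · subst hkj; simpa using h1
      · simpa using (hk k hkj).1
    · right; funext k
      by_cases hkj : k = j
      · subst hkj; simpa using h2
      · simpa using (hk k hkj).2

lemma irred_neg {r : ℕ} {a : Fin r → ℤ} {i0 j : Fin r} (hi0 : 0 < a i0) (hj : a j < 0)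
    (hc : ∃ n : ℕ, 0 ≤ (n : ℤ) * a i0 + a j) :
    Irred r (Hol r a) (Pi.single i0 (Nat.find hc) + Pi.single j 1) := by
  have hij : i0 ≠ j := by intro h; subst h; omega
  set c := Nat.find hc with hcdef
  have hcspec : 0 ≤ (c : ℤ) * a i0 + a j := Nat.find_spec hc
  -- the vector
  set v : Fin r → ℕ := Pi.single i0 c + Pi.single j 1 with hvdef
  have hvi0 : v i0 = c := by
    simp [hvdef, Pi.single_eq_same, Pi.single_eq_of_ne hij, Pi.single_eq_of_ne hij.symm]
  have hvj : v j = 1 := by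
    simp [hvdef, Pi.single_eq_same, Pi.single_eq_of_ne hij, Pi.single_eq_of_ne hij.symm]
  have hvk : ∀ k, k ≠ i0 → k ≠ j → v k = 0 := by
    intro k h1 h2; simp [hvdef, Pi.single_eq_of_ne h1, Pi.single_eq_of_ne h2]
  have hvsum : ∑ k, (v k : ℤ) * a k = (c : ℤ) * a i0 + a j := by
    rw [sum_support_pair a v hij hvk, hvi0, hvj]; push_cast; ring
  refine ⟨mem_Hol'' (by rw [hvsum]; exact hcspec), ?_, ?_⟩
  · intro h
    have := congrFun h j
    rw [hvj] at this
    simp at this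
  · intro u w hu hw heq
    -- key: if one summand has j-coordinate 0, it must be 0
    have key : ∀ u w : Fin r → ℕ, w ∈ Hol r a → v = u + w → u j = 0 → u = 0 := by
      intro u w hw heq huj
      have hsplit : ∀ k, v k = u k + w k := fun k => by
        simpa only [Pi.add_apply] using congrFun heq k
      have hwj : w j = 1 := by have := hsplit j; rw [hvj] at this; omega
      have hsum : u i0 + w i0 = c := by have := hsplit i0; rw [hvi0] at this; omega
      have hzk : ∀ k, k ≠ i0 → k ≠ j → u k = 0 ∧ w k = 0 := by
        intro k h1 h2
        have := hsplit k
        rw [hvk k h1 h2] at this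
        omega
      have hui0 : u i0 = 0 := by
        by_contra h
        have hlt : w i0 < c := by omega
        have hwsum : 0 ≤ (w i0 : ℤ) * a i0 + a j := by
          have := mem_Hol' hw
          rwa [sum_support_pair a w hij (fun k h1 h2 => (hzk k h1 h2).2), hwj,
            Nat.cast_one, one_mul] at this
        exact Nat.find_min hc hlt hwsum
      funext k
      by_cases h1 : k = i0
      · subst h1; simpa using hui0
      by_cases h2 : k = j
      · subst h2; simpa using huj
      · simpa using (hzk k h1 h2).1
    have hj' : u j + w j = 1 := by
      have := congrFun heq j
      simp only [Pi.add_apply] at this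
      rw [hvj] at this; omega
    rcases Nat.add_eq_one_iff.mp hj' with ⟨h1, _⟩ | ⟨_, h2⟩
    · left; exact key u w hw heq h1
    · right; exact key w u hu (by rw [heq, add_comm]) h2

theorem hilbert_basis_card_ge (r : ℕ) (a : Fin r → ℤ)
    (hdiff : ∀ v : Fin r → ℕ, ∃ u ∈ Hol r a, ∃ w ∈ Hol r a, v + w = u) :
    ∃ S : Finset (Fin r → ℕ), (∀ v ∈ S, Irred r (Hol r a) v) ∧ S.card = r := by
  by_cases hpos : ∀ j, 0 ≤ a j
  · refine ⟨Finset.image (fun j => Pi.single j 1) Finset.univ, ?_, ?_⟩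
    · intro v hv
      simp only [Finset.mem_image, Finset.mem_univ, true_and] at hv
      obtain ⟨j, rfl⟩ := hv
      exact irred_single (hpos j)
    · rw [Finset.card_image_of_injective _ ?_, Finset.card_univ, Fintype.card_fin]
      intro j j' h
      by_contra hne
      have := congrFun h j
      simp [Pi.single_eq_same, Pi.single_eq_of_ne hne, Pi.single_eq_of_ne (Ne.symm hne)] at this
  · push_neg at hpos
    obtain ⟨j0, hj0⟩ := hpos
    obtain ⟨i0, hi0⟩ : ∃ i, 0 < a i := by
      obtain ⟨u, hu, w, hw, hvw⟩ := hdiff (Pi.single j0 1)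
      have hu1 : 1 ≤ u j0 := by
        have := congrFun hvw j0
        simp [Pi.single_eq_same] at this
        omega
      by_contra h
      push_neg at h
      have hterm : ∀ k ∈ (Finset.univ.erase j0), ((u k : ℤ) * a k) ≤ 0 :=
        fun k _ => mul_nonpos_of_nonneg_of_nonpos (by positivity) (h k)
      have h1 : (u j0 : ℤ) * a j0 + ∑ k ∈ Finset.univ.erase j0, (u k : ℤ) * a k
          = ∑ k, (u k : ℤ) * a k :=
        Finset.add_sum_erase Finset.univ (fun k => (u k : ℤ) * a k) (Finset.mem_univ j0)
      have h2 : ∑ k ∈ Finset.univ.erase j0, (u k : ℤ) * a k ≤ 0 := Finset.sum_nonpos hterm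
      have h3 : (u j0 : ℤ) * a j0 ≤ 1 * a j0 :=
        mul_le_mul_of_nonpos_right (by exact_mod_cast hu1) hj0.le
      have h4 := mem_Hol' hu
      linarith
    have hc : ∀ j : Fin r, ∃ n : ℕ, 0 ≤ (n : ℤ) * a i0 + a j := by
      intro j
      refine ⟨(a j).natAbs, ?_⟩
      have h1 : ((a j).natAbs : ℤ) * 1 ≤ ((a j).natAbs : ℤ) * a i0 :=
        mul_le_mul_of_nonneg_left hi0 (by positivity)
      have h2 : ((a j).natAbs : ℤ) = |a j| := Int.abs_eq_natAbs (a j) ▸ rfl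
      have := abs_nonneg (a j)
      have := neg_abs_le (a j)
      linarith
    set f : Fin r → (Fin r → ℕ) := fun j =>
      if 0 ≤ a j then Pi.single j 1 else Pi.single i0 (Nat.find (hc j)) + Pi.single j 1
      with hfdef
    have hinj : Function.Injective f := by
      intro j j' h
      by_contra hne
      have hji0 : ∀ m : Fin r, a m < 0 → m ≠ i0 := by intro m hm he; subst he; omega
      by_cases h1 : 0 ≤ a j <;> by_cases h2 : 0 ≤ a j'
      · have := congrFun h j
        simp [hfdef, h1, h2, Pi.single_eq_same, Pi.single_eq_of_ne hne,
          Pi.single_eq_of_ne (Ne.symm hne)] at this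
      · push_neg at h2
        have := congrFun h j'
        simp [hfdef, h1, not_le.mpr h2, Pi.single_eq_same, Pi.single_eq_of_ne hne,
          Pi.single_eq_of_ne (Ne.symm hne), Pi.single_eq_of_ne (hji0 j' h2),
          Pi.single_eq_of_ne (Ne.symm (hji0 j' h2))] at this
      · push_neg at h1
        have := congrFun h j
        simp [hfdef, h2, not_le.mpr h1, Pi.single_eq_same, Pi.single_eq_of_ne hne,
          Pi.single_eq_of_ne (Ne.symm hne), Pi.single_eq_of_ne (hji0 j h1),
          Pi.single_eq_of_ne (Ne.symm (hji0 j h1))] at this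
      · push_neg at h1; push_neg at h2
        have := congrFun h j
        simp [hfdef, not_le.mpr h1, not_le.mpr h2, Pi.single_eq_same,
          Pi.single_eq_of_ne hne, Pi.single_eq_of_ne (Ne.symm hne),
          Pi.single_eq_of_ne (hji0 j h1), Pi.single_eq_of_ne (Ne.symm (hji0 j h1)),
          Pi.single_eq_of_ne (hji0 j' h2), Pi.single_eq_of_ne (Ne.symm (hji0 j' h2))] at this
    refine ⟨Finset.image f Finset.univ, ?_, ?_⟩
    · intro v hv
      simp only [Finset.mem_image, Finset.mem_univ, true_and] at hv
      obtain ⟨j, rfl⟩ := hv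
      by_cases h1 : 0 ≤ a j
      · simp only [hfdef, if_pos h1]
        exact irred_single h1
      · push_neg at h1
        simp only [hfdef, if_neg (not_le.mpr h1)]
        exact irred_neg hi0 h1 (hc j)
    · rw [Finset.card_image_of_injective _ hinj, Finset.card_univ, Fintype.card_fin]
end

section
/- Let $a : \mathrm{Fin}\, r \to \mathbb{Z}$ with $d_j > 0$ integers satisfying $\sum_j d_j a_j \geq 0$, and let $H = \{v \in \mathbb{N}^r \mid \sum_j v_j a_j \geq 0\}$. Suppose $a_l < 0$ for some $l$, and let $k$ be an index with $a_k > 0$. For each $j$, let $m_j = \min\{m \in \mathbb{N} \mid m\, a_k + a_j \geq 0\}$. Then each vector $m_j e_k + e_j$ is an irreducible element of $H$. -/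
lemma hol_sum (r : ℕ) (a : Fin r → ℤ) (k j : Fin r) (n p : ℕ) :
    ∑ i, (((n • Pi.single k 1 + p • Pi.single j 1 : Fin r → ℕ)) i : ℤ) * a i
      = n * a k + p * a j := by
  have : ∀ i, (((n • Pi.single k 1 + p • Pi.single j 1 : Fin r → ℕ)) i : ℤ) * a i
      = (if i = k then (n : ℤ) * a i else 0) + (if i = j then (p : ℤ) * a i else 0) := by
    intro i
    simp only [Pi.add_apply, Pi.smul_apply, Pi.single_apply, smul_eq_mul]
    by_cases h1 : i = k <;> by_cases h2 : i = j <;> simp [h1, h2] <;> push_cast <;> (try split_ifs) <;> ring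
  rw [Finset.sum_congr rfl fun i _ => this i, Finset.sum_add_distrib]
  simp

theorem irred_of_min_exponent (r : ℕ) (a d : Fin r → ℤ)
    (hd : ∀ j, 0 < d j) (hsum : 0 ≤ ∑ j, d j * a j)
    (hl : ∃ l, a l < 0) (k : Fin r) (hk : 0 < a k)
    (m : Fin r → ℕ) (hm : ∀ j, m j = sInf {n : ℕ | 0 ≤ (n : ℤ) * a k + a j}) :
    ∀ j, Irred r (Hol r a) (m j • Pi.single k 1 + Pi.single j 1) := by
  intro j
  set v : Fin r → ℕ := m j • Pi.single k 1 + Pi.single j 1 with hv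
  -- the defining set is nonempty
  have hne : {n : ℕ | 0 ≤ (n : ℤ) * a k + a j}.Nonempty := by
    refine ⟨(a j).natAbs, ?_⟩
    have h1 : (1 : ℤ) ≤ a k := hk
    have h2 : ((a j).natAbs : ℤ) * 1 ≤ ((a j).natAbs : ℤ) * a k :=
      mul_le_mul_of_nonneg_left h1 (by positivity)
    have h3 : -a j ≤ ((a j).natAbs : ℤ) := by omega
    simp only [Set.mem_setOf_eq]
    linarith [h2, h3]
  have hmem : 0 ≤ (m j : ℤ) * a k + a j := by
    have := Nat.sInf_mem hne
    rw [← hm j] at this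
    exact this
  have hmin : ∀ n : ℕ, 0 ≤ (n : ℤ) * a k + a j → m j ≤ n := by
    intro n hn
    rw [hm j]
    exact Nat.sInf_le hn
  refine ⟨?_, ?_, ?_⟩
  · -- membership
    show 0 ≤ ∑ i, ((v i : ℤ)) * a i
    have : v = m j • Pi.single k 1 + 1 • Pi.single j 1 := by simp [hv]
    rw [this, hol_sum]
    push_cast
    linarith
  · -- nonzero
    intro h
    have := congrFun h j
    simp [hv, Pi.single_apply] at this
  · -- irreducibility
    intro u w hu hw heq
    have hco : ∀ i, u i + w i = v i := fun i => (congrFun heq i).symm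
    have hvi : ∀ i, i ≠ k → i ≠ j → v i = 0 := by
      intro i h1 h2
      simp [hv, Pi.single_apply, Ne.symm h1, Ne.symm h2]
    -- helper: if the e_j part goes to one side, the other side is zero
    have key : ∀ u w : Fin r → ℕ, (∀ i, u i + w i = v i) → u j = 0 →
        w ∈ Hol r a → u = 0 := by
      intro u w hco huj hw
      have hzero : ∀ i, i ≠ k → u i = 0 := by
        intro i hik
        by_cases hij : i = j
        · rw [hij]; exact huj
        · have := hco i
          rw [hvi i hik hij] at this
          omega
      by_cases hjk : j = k
      · -- then u k = u j = 0
        funext i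
        by_cases hik : i = k
        · rw [hik, ← hjk]; exact huj
        · exact hzero i hik
      · -- j ≠ k : use minimality
        have hwj : w j = 1 := by
          have := hco j
          simp [hv, Pi.single_apply, Ne.symm hjk] at this
          omega
        have hwzero : ∀ i, i ≠ k → i ≠ j → w i = 0 := by
          intro i h1 h2
          have := hco i
          rw [hvi i h1 h2] at this
          omega
        have hweq : w = w k • Pi.single k 1 + 1 • Pi.single j 1 := by
          funext i
          by_cases h1 : i = k
          · subst h1
            simp [Pi.single_apply, Ne.symm hjk]
          · by_cases h2 : i = j
            · subst h2
              simp [Pi.single_apply, hjk, hwj]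
            · simp [Pi.single_apply, Ne.symm h1, Ne.symm h2, hwzero i h1 h2]
        have hwH : 0 ≤ ∑ i, ((w i : ℤ)) * a i := hw
        rw [hweq, hol_sum] at hwH
        push_cast at hwH
        have hwk : m j ≤ w k := hmin (w k) (by linarith)
        have hvk : v k = m j := by
          simp [hv, Pi.single_apply, hjk]
        have huk : u k = 0 := by
          have := hco k
          rw [hvk] at this
          omega
        funext i
        by_cases hik : i = k
        · rw [hik]; exact huk
        · exact hzero i hik
    have hvj1 : u j + w j = 1 ∨ j = k := by
      by_cases hjk : j = k
      · right; exact hjk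
      · left
        have := hco j
        simp [hv, Pi.single_apply, Ne.symm hjk] at this
        omega
    rcases hvj1 with h1 | hjk
    · rcases Nat.add_eq_one_iff.mp h1 with ⟨h, _⟩ | ⟨_, h⟩
      · left; exact key u w hco h hw
      · right
        refine key w u (fun i => by rw [add_comm]; exact hco i) h hu
    · -- j = k : v = (m j + 1) • e_k and m k = 0
      subst hjk
      have hmj0 : m j = 0 := by
        have := hmin 0 (by push_cast; linarith)
        omega
      have hvj : v j = 1 := by simp [hv, Pi.single_apply, hmj0]
      have h1 : u j + w j = 1 := by rw [hco j, hvj]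
      rcases Nat.add_eq_one_iff.mp h1 with ⟨h, _⟩ | ⟨_, h⟩
      · left; exact key u w hco h hw
      · right
        exact key w u (fun i => by rw [add_comm]; exact hco i) h hu
end

section
/- Let $a : \mathrm{Fin}\, r \to \mathbb{Z}$ and $H = \{v \in \mathbb{N}^r \mid \sum_j v_j a_j \geq 0\}$, with $r \geq 2$. Suppose: (a) there are positive integers $d_j$ with $\sum_j d_j a_j \geq 0$; (b) every element of $H$ is a sum of irreducibles from a set of exactly $r$ irreducible elements and such decompositions are unique up to order (H is factorial with $r$ irreducibles); (c) for every pair $k \neq l$ in $\{1,\dots,r\}$ there exists $v \in H$ with $v_k > 0$ and $v_l = 0$. Then $a_j \geq 0$ for all $j$ (equivalently $H = \mathbb{N}^r$). -/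
/-- The linear functional `v ↦ ∑ j, v j * a j`. -/
def fval {r : ℕ} (a : Fin r → ℤ) (v : Fin r → ℕ) : ℤ := ∑ j, (v j : ℤ) * a j

lemma mem_Hol_iff {r : ℕ} (a : Fin r → ℤ) (v : Fin r → ℕ) :
    v ∈ Hol r a ↔ 0 ≤ fval a v := Iff.rfl

lemma fval_add {r : ℕ} (a : Fin r → ℤ) (u v : Fin r → ℕ) :
    fval a (u + v) = fval a u + fval a v := by
  unfold fval
  rw [← Finset.sum_add_distrib]
  refine Finset.sum_congr rfl fun j _ => ?_
  simp only [Pi.add_apply]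
  push_cast
  ring

lemma fval_single {r : ℕ} (a : Fin r → ℤ) (k : Fin r) (c : ℕ) :
    fval a (Pi.single k c) = (c : ℤ) * a k := by
  unfold fval
  rw [Finset.sum_eq_single k]
  · simp
  · intro b _ hb
    simp [Pi.single_eq_of_ne hb]
  · simp

lemma msum_apply {r : ℕ} (M : Multiset (Fin r → ℕ)) (j : Fin r) :
    M.sum j = (M.map (fun x => x j)).sum := by
  induction M using Multiset.induction with
  | empty => simp
  | cons y t ih => simp [ih]

/-- A unit vector which lies in `Hol r a` must belong to any generating set `S`
as in the factoriality hypothesis. -/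
lemma single_mem_S {r : ℕ} (a : Fin r → ℤ) (S : Finset (Fin r → ℕ))
    (hS : ∀ v ∈ S, Irred r (Hol r a) v)
    (hufd : ∀ v ∈ Hol r a, ∃! l : Multiset (Fin r → ℕ), (∀ x ∈ l, x ∈ S) ∧ l.sum = v)
    (m : Fin r) (hm : 0 ≤ a m) : Pi.single m 1 ∈ S := by
  have hmem : Pi.single m 1 ∈ Hol r a := by
    rw [mem_Hol_iff, fval_single]
    simpa using hm
  obtain ⟨M, ⟨hMS, hMsum⟩, -⟩ := hufd _ hmem
  -- some element of M has positive m-th coordinate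
  have hx : ∃ x ∈ M, x m ≠ 0 := by
    by_contra h
    push_neg at h
    have : (M.sum) m = 1 := by rw [hMsum]; simp
    have hz : (M.sum) m = 0 := by
      rw [msum_apply]
      apply Multiset.sum_eq_zero
      intro x hx
      obtain ⟨y, hy, rfl⟩ := Multiset.mem_map.mp hx
      exact h y hy
    omega
  obtain ⟨x, hxM, hxm⟩ := hx
  -- `x ≤ M.sum = Pi.single m 1` pointwise, and `x m ≠ 0`, so `x = Pi.single m 1`
  have hdecomp : M.sum = x + (M.erase x).sum := by
    conv_lhs => rw [← Multiset.cons_erase hxM]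
    rw [Multiset.sum_cons]
  have hle : ∀ j, x j ≤ M.sum j := by
    intro j
    rw [hdecomp]
    exact Nat.le_add_right _ _
  have hx_eq : x = Pi.single m 1 := by
    funext j
    have := hle j
    rw [hMsum] at this
    rcases eq_or_ne j m with rfl | hj
    · simp only [Pi.single_eq_same] at this ⊢
      omega
    · simp only [Pi.single_eq_of_ne hj] at this ⊢
      omega
  rw [← hx_eq]
  exact hMS x hxM

theorem artin_conjecture_of_factorial (r : ℕ) (hr : 2 ≤ r) (a : Fin r → ℤ)
    (d : Fin r → ℤ) (hd : ∀ j, 0 < d j) (hsum : 0 ≤ ∑ j, d j * a j)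
    (hfact : ∃ S : Finset (Fin r → ℕ), S.card = r ∧ (∀ v ∈ S, Irred r (Hol r a) v) ∧
      ∀ v ∈ Hol r a, ∃! l : Multiset (Fin r → ℕ), (∀ x ∈ l, x ∈ S) ∧ l.sum = v)
    (hsep : ∀ k l : Fin r, k ≠ l → ∃ v ∈ Hol r a, 0 < v k ∧ v l = 0) :
    ∀ j, 0 ≤ a j := by
  obtain ⟨S, hcard, hSirr, hufd⟩ := hfact
  intro k
  by_contra hk
  push_neg at hk
  -- Step 1: there is some `l` with `0 < a l`
  have hpos : ∃ l, 0 < a l := by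
    by_contra h
    push_neg at h
    have hlt : ∑ j, d j * a j < ∑ _j : Fin r, (0 : ℤ) :=
      Finset.sum_lt_sum
        (fun i _ => mul_nonpos_of_nonneg_of_nonpos (hd i).le (h i))
        ⟨k, Finset.mem_univ k, mul_neg_of_pos_of_neg (hd k) hk⟩
    rw [Finset.sum_const_zero] at hlt
    linarith
  obtain ⟨l, hl⟩ := hpos
  have hkl : k ≠ l := by rintro rfl; linarith
  by_cases hone : ∀ l', 0 < a l' → l' = l
  · -- Case A: `l` is the only index with positive `a`; use separation
    obtain ⟨v, hv, hvk, hvl⟩ := hsep k l hkl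
    rw [mem_Hol_iff] at hv
    have hlt : fval a v < ∑ _j : Fin r, (0 : ℤ) := by
      apply Finset.sum_lt_sum
      · intro i _
        rcases eq_or_ne i l with rfl | hi
        · simp [hvl]
        · have hai : a i ≤ 0 := by
            by_contra h'
            exact hi (hone i (by linarith))
          exact mul_nonpos_of_nonneg_of_nonpos (by positivity) hai
      · refine ⟨k, Finset.mem_univ k, ?_⟩
        have h1 : (1 : ℤ) ≤ (v k : ℤ) := by exact_mod_cast hvk
        nlinarith
    rw [Finset.sum_const_zero] at hlt
    linarith
  · -- Case B: there are two distinct indices with positive `a`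
    push_neg at hone
    obtain ⟨l', hl', hll'⟩ := hone
    have hkl' : k ≠ l' := by rintro rfl; linarith
    -- the key natural numbers
    set α := (a l).toNat with hα_def
    set β := (a l').toNat with hβ_def
    set γ := (-a k).toNat with hγ_def
    have hα : (α : ℤ) = a l := Int.toNat_of_nonneg hl.le
    have hβ : (β : ℤ) = a l' := Int.toNat_of_nonneg hl'.le
    have hγ : (γ : ℤ) = -a k := Int.toNat_of_nonneg (by linarith)
    have hαpos : 0 < α := by
      have : (0 : ℤ) < (α : ℤ) := by rw [hα]; exact hl
      exact_mod_cast this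
    have hβpos : 0 < β := by
      have : (0 : ℤ) < (β : ℤ) := by rw [hβ]; exact hl'
      exact_mod_cast this
    have hγpos : 0 < γ := by
      have : (0 : ℤ) < (γ : ℤ) := by rw [hγ]; linarith
      exact_mod_cast this
    -- unit vectors and the two relation vectors
    set el : Fin r → ℕ := Pi.single l 1 with hel_def
    set el' : Fin r → ℕ := Pi.single l' 1 with hel'_def
    set w : Fin r → ℕ := Pi.single k α + Pi.single l γ with hw_def
    set w' : Fin r → ℕ := Pi.single k β + Pi.single l' γ with hw'_def
    have hfw : fval a w = 0 := by
      rw [hw_def, fval_add, fval_single, fval_single, hα, hγ]; ring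
    have hfw' : fval a w' = 0 := by
      rw [hw'_def, fval_add, fval_single, fval_single, hβ, hγ]; ring
    have hwH : w ∈ Hol r a := by rw [mem_Hol_iff, hfw]
    have hw'H : w' ∈ Hol r a := by rw [mem_Hol_iff, hfw']
    have helH : el ∈ Hol r a := by
      rw [mem_Hol_iff, hel_def, fval_single]; simpa using hl.le
    have hel'H : el' ∈ Hol r a := by
      rw [mem_Hol_iff, hel'_def, fval_single]; simpa using hl'.le
    have helS : el ∈ S := single_mem_S a S hSirr hufd l hl.le
    have hel'S : el' ∈ S := single_mem_S a S hSirr hufd l' hl'.le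
    -- factorizations of w and w'
    obtain ⟨Mw, ⟨hMwS, hMwsum⟩, -⟩ := hufd w hwH
    obtain ⟨Mw', ⟨hMw'S, hMw'sum⟩, -⟩ := hufd w' hw'H
    -- the element with two factorizations
    set z : Fin r → ℕ := β • w + (γ * α) • el' with hz_def
    have hzH : z ∈ Hol r a := by
      exact AddSubmonoid.add_mem _ (AddSubmonoid.nsmul_mem _ hwH β)
        (AddSubmonoid.nsmul_mem _ hel'H (γ * α))
    set L1 : Multiset (Fin r → ℕ) := β • Mw + Multiset.replicate (γ * α) el' with hL1_def
    set L2 : Multiset (Fin r → ℕ) := α • Mw' + Multiset.replicate (γ * β) el with hL2_def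
    have hL1sum : L1.sum = z := by
      rw [hL1_def, Multiset.sum_add, Multiset.sum_nsmul, Multiset.sum_replicate, hMwsum,
        hz_def]
    have hkey : α • w' + (γ * β) • el = z := by
      funext j
      simp only [hz_def, hw_def, hw'_def, hel_def, hel'_def, Pi.add_apply, Pi.smul_apply,
        smul_eq_mul, Pi.single_apply]
      rcases eq_or_ne j k with rfl | hjk <;>
        rcases eq_or_ne j l with rfl | hjl <;>
          rcases eq_or_ne j l' with rfl | hjl' <;>
            simp_all <;> ring
    have hL2sum : L2.sum = z := by
      rw [hL2_def, Multiset.sum_add, Multiset.sum_nsmul, Multiset.sum_replicate, hMw'sum]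
      exact hkey
    have hL1S : ∀ x ∈ L1, x ∈ S := by
      intro x hx
      rcases Multiset.mem_add.mp hx with hx | hx
      · exact hMwS x (Multiset.mem_of_mem_nsmul hx)
      · rw [Multiset.eq_of_mem_replicate hx]; exact hel'S
    have hL2S : ∀ x ∈ L2, x ∈ S := by
      intro x hx
      rcases Multiset.mem_add.mp hx with hx | hx
      · exact hMw'S x (Multiset.mem_of_mem_nsmul hx)
      · rw [Multiset.eq_of_mem_replicate hx]; exact helS
    obtain ⟨Mz, -, hzuniq⟩ := hufd z hzH
    have hL12 : L1 = L2 := (hzuniq L1 ⟨hL1S, hL1sum⟩).trans (hzuniq L2 ⟨hL2S, hL2sum⟩).symm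
    -- count copies of el' on both sides
    have hell' : el ≠ el' := by
      intro h
      have h2 := congrFun h l'
      rw [hel_def, hel'_def] at h2
      rw [Pi.single_eq_of_ne hll', Pi.single_eq_same] at h2
      exact zero_ne_one h2
    have hcount1 : Multiset.count el' L1 = γ * α := by
      rw [hL1_def, Multiset.count_add, Multiset.count_nsmul, Multiset.count_replicate]
      have : Multiset.count el' Mw = 0 := by
        rw [Multiset.count_eq_zero]
        intro hmem
        -- every element of Mw is ≤ w pointwise, but w l' = 0 while el' l' = 1
        have hdecomp : w = el' + (Mw.erase el').sum := by
          conv_lhs => rw [← hMwsum, ← Multiset.cons_erase hmem, Multiset.sum_cons]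
        have := congrFun hdecomp l'
        simp only [hw_def, hel'_def, Pi.add_apply, Pi.single_eq_same,
          Pi.single_eq_of_ne hkl'.symm, Pi.single_eq_of_ne hll'] at this
        omega
      rw [this]
      simp
    have hcount2 : Multiset.count el' L2 = α * Multiset.count el' Mw' := by
      rw [hL2_def, Multiset.count_add, Multiset.count_nsmul, Multiset.count_replicate,
        if_neg hell', Nat.add_zero]
    have hcountMw' : Multiset.count el' Mw' = 0 := by
      rw [Multiset.count_eq_zero]
      intro hmem
      have hdecomp : w' = el' + (Mw'.erase el').sum := by
        conv_lhs => rw [← hMw'sum, ← Multiset.cons_erase hmem, Multiset.sum_cons]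
      have hrest : (Mw'.erase el').sum ∈ Hol r a := by
        apply AddSubmonoid.multiset_sum_mem
        intro x hx
        exact (hSirr x (hMw'S x (Multiset.mem_of_mem_erase hx))).1
      rw [mem_Hol_iff] at hrest
      have : fval a w' = fval a el' + fval a (Mw'.erase el').sum := by
        rw [hdecomp, fval_add]
      rw [hfw', hel'_def, fval_single] at this
      push_cast at this
      linarith
    rw [hL12, hcount2, hcountMw', Nat.mul_zero] at hcount1
    exact (Nat.mul_pos hγpos hαpos).ne' hcount1.symm
end

section
/- Let $H$ be a submonoid of $\mathbb{N}^r$ such that every element of $H$ is a sum of elements from a finite set $S$ of irreducible elements of $H$, with such decompositions unique up to permutation, and suppose $|S| = r$ and the subgroup of $\mathbb{Z}^r$ generated by $H$ is all of $\mathbb{Z}^r$. Then the elements of $S$ form a basis of $\mathbb{Z}^r$ as a free abelian group. -/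
theorem hilbert_basis_is_basis (r : ℕ) (H : AddSubmonoid (Fin r → ℕ))
    (S : Finset (Fin r → ℕ)) (hS : ∀ v ∈ S, Irred r H v) (hcard : S.card = r)
    (hfact : ∀ v ∈ H, ∃! l : Multiset (Fin r → ℕ), (∀ x ∈ l, x ∈ S) ∧ l.sum = v)
    (hgen : AddSubgroup.closure
        ((fun v : Fin r → ℕ => fun j => (v j : ℤ)) '' (H : Set (Fin r → ℕ))) = ⊤) :
    ∃ b : Module.Basis S ℤ (Fin r → ℤ), ∀ s : S, b s = fun j => ((s : Fin r → ℕ) j : ℤ) := by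
  classical
  set c : (Fin r → ℕ) →+ (Fin r → ℤ) :=
    { toFun := fun v j => (v j : ℤ)
      map_zero' := by ext j; simp
      map_add' := by intro u v; ext j; push_cast; simp } with hc
  set f : S → (Fin r → ℤ) := fun s => c (s : Fin r → ℕ) with hf
  -- Step 1: span ℤ (range f) = ⊤
  have hspan : Submodule.span ℤ (Set.range f) = ⊤ := by
    have h1 : AddSubgroup.closure ((fun v : Fin r → ℕ => fun j => (v j : ℤ)) '' (H : Set (Fin r → ℕ)))
        ≤ (Submodule.span ℤ (Set.range f)).toAddSubgroup := by
      rw [AddSubgroup.closure_le]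
      rintro x ⟨v, hv, rfl⟩
      obtain ⟨l, ⟨hl, hlsum⟩, -⟩ := hfact v hv
      show c v ∈ (Submodule.span ℤ (Set.range f)).toAddSubgroup
      rw [← hlsum, map_multiset_sum]
      refine AddSubgroup.multiset_sum_mem _ _ ?_
      intro x hx
      obtain ⟨u, hu, rfl⟩ := Multiset.mem_map.mp hx
      exact Submodule.subset_span ⟨⟨u, hl u hu⟩, rfl⟩
    rw [eq_top_iff]
    intro x _
    exact h1 (hgen ▸ AddSubgroup.mem_top x)
  -- Step 2: equivalence S ≃ Fin r
  have hScard : Fintype.card S = r := by simp [hcard]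
  let e : S ≃ Fin r := Fintype.equivFinOfCardEq hScard
  -- Step 3: surjective hence bijective endomorphism
  let g : (Fin r → ℤ) →ₗ[ℤ] (Fin r → ℤ) := (Pi.basisFun ℤ (Fin r)).constr ℤ (f ∘ e.symm)
  have hgsurj : Function.Surjective g := by
    rw [← LinearMap.range_eq_top, Module.Basis.constr_range]
    rw [Set.range_comp, Equiv.range_eq_univ, Set.image_univ]
    exact hspan
  have hgbij : Function.Bijective g :=
    ⟨OrzechProperty.injective_of_surjective_endomorphism g hgsurj, hgsurj⟩
  let E : (Fin r → ℤ) ≃ₗ[ℤ] (Fin r → ℤ) := LinearEquiv.ofBijective g hgbij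
  refine ⟨(((Pi.basisFun ℤ (Fin r)).map E).reindex e.symm), ?_⟩
  intro s
  have : (((Pi.basisFun ℤ (Fin r)).map E).reindex e.symm) s
      = E ((Pi.basisFun ℤ (Fin r)) (e s)) := by
    rw [Module.Basis.reindex_apply]
    simp [Module.Basis.map_apply]
  rw [this]
  show g ((Pi.basisFun ℤ (Fin r)) (e s)) = _
  rw [Module.Basis.constr_basis]
  simp [f, c]
end

section
/- Let $a : \mathrm{Fin}\, r \to \mathbb{Z}$, $H = \{v \in \mathbb{N}^r \mid \sum_j v_j a_j \geq 0\}$, and suppose $a_k > 0$ and $a_l < 0$ for some indices $k \neq l$. Define $m_j = \min\{m \in \mathbb{N} \mid m\,a_k + a_j \geq 0\}$ for each $j$. If every element of $H$ decomposes as a sum of elements from $\{m_1 e_k + e_1, \dots, m_r e_k + e_r\}$, then every $v \in H$ with $v_l > 0$ satisfies $v_k \geq m_l > 0$. -/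
theorem divisibility_forced (r : ℕ) (a : Fin r → ℤ) (k l : Fin r) (hkl : k ≠ l)
    (hk : 0 < a k) (hl : a l < 0)
    (m : Fin r → ℕ) (hm : ∀ j, m j = sInf {n : ℕ | 0 ≤ (n : ℤ) * a k + a j})
    (hdec : ∀ v ∈ Hol r a, ∃ L : Multiset (Fin r),
      v = (L.map fun j => m j • Pi.single k 1 + Pi.single j 1).sum) :
    ∀ v ∈ Hol r a, 0 < v l → m l ≤ v k ∧ 0 < m l := by
  have hS : ((a l).natAbs : ℕ) ∈ {n : ℕ | 0 ≤ (n : ℤ) * a k + a l} := by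
    simp only [Set.mem_setOf_eq]
    have h1 : ((a l).natAbs : ℤ) = -a l := by omega
    have h2 : ((a l).natAbs : ℤ) * 1 ≤ ((a l).natAbs : ℤ) * a k :=
      mul_le_mul_of_nonneg_left (by omega) (by positivity)
    omega
  have hmlpos : 0 < m l := by
    rw [hm l]
    rcases Nat.eq_zero_or_pos (sInf {n : ℕ | 0 ≤ (n : ℤ) * a k + a l}) with h | h
    · exfalso
      have := Nat.sInf_mem ⟨_, hS⟩
      rw [h] at this
      simp only [Set.mem_setOf_eq, Nat.cast_zero, zero_mul, zero_add] at this
      omega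
    · exact h
  intro v hv hvl
  refine ⟨?_, hmlpos⟩
  obtain ⟨L, hL⟩ := hdec v hv
  have happ : ∀ i : Fin r, v i =
      (L.map fun j => m j * (Pi.single k 1 : Fin r → ℕ) i + (Pi.single j 1 : Fin r → ℕ) i).sum := by
    intro i
    have := congrArg (Pi.evalAddMonoidHom (fun _ => ℕ) i) hL
    rw [map_multiset_sum, Multiset.map_map] at this
    simpa [Function.comp] using this
  have hvl' := happ l
  have hlL : l ∈ L := by
    by_contra hnot
    rw [hvl'] at hvl
    have : (L.map fun j => m j * (Pi.single k 1 : Fin r → ℕ) l + (Pi.single j 1 : Fin r → ℕ) l).sum = 0 := by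
      apply Multiset.sum_eq_zero
      intro x hx
      rw [Multiset.mem_map] at hx
      obtain ⟨j, hjL, rfl⟩ := hx
      have hjl : j ≠ l := fun h => hnot (h ▸ hjL)
      rw [Pi.single_apply, Pi.single_apply, if_neg (fun h => hkl h.symm), if_neg (fun h => hjl h.symm)]
      simp
    omega
  have hvk := happ k
  have hmem : m l * (Pi.single k 1 : Fin r → ℕ) k + (Pi.single l 1 : Fin r → ℕ) k ∈
      L.map fun j => m j * (Pi.single k 1 : Fin r → ℕ) k + (Pi.single j 1 : Fin r → ℕ) k :=
    Multiset.mem_map_of_mem _ hlL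
  have hle := Multiset.single_le_sum (fun x _ => Nat.zero_le x) _ hmem
  rw [← hvk] at hle
  have : m l ≤ m l * (Pi.single k 1 : Fin r → ℕ) k + (Pi.single l 1 : Fin r → ℕ) k := by
    rw [Pi.single_apply, if_pos rfl]
    omega
  omega
end
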